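/- arXiv:2309.03751 — 8 statements merged into one kernel-verified Lean document; each statement's English description precedes it below -/
import Mathlib

section
/- The Average Medoid Silhouette is rich: for every finite set X with n ≥ 2 elements and every nonempty set of medoids M ⊊ X with |M| ≥ 2, there exists a dissimilarity d over X such that M is the unique maximizer of S̃(X, d, M') over all medoid sets M' of size |M|. -/
/-- distance from `x` to its `(n+1)`-th nearest medoid in `M` (0-indexed). -/
noncomputable def nthDist {X : Type*} (d : X → X → ℝ) (M : Finset X) (x : X) (n : ℕ) : ℝ :=
  ((M.val.map (d x)).sort (· ≤ ·)).getD n 0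

/-- Medoid Silhouette of a single point. -/
noncomputable def msil {X : Type*} (d : X → X → ℝ) (M : Finset X) (x : X) : ℝ :=
  if nthDist d M x 0 = 0 ∧ nthDist d M x 1 = 0 then 1
  else 1 - nthDist d M x 0 / nthDist d M x 1

/-- Average Medoid Silhouette. -/
noncomputable def AMS {X : Type*} [Fintype X] (d : X → X → ℝ) (M : Finset X) : ℝ :=
  (∑ x : X, msil d M x) / (Fintype.card X)

/-- `x ∼_M y`: x and y share a nearest medoid in `M`. -/
def simM {X : Type*} (d : X → X → ℝ) (M : Finset X) (x y : X) : Prop :=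
  ∃ m ∈ M, d x m = nthDist d M x 0 ∧ d y m = nthDist d M y 0

lemma sort_two {X : Type*} (d : X → X → ℝ) (M : Finset X) (x : X) (h2 : 2 ≤ M.card) :
    ∃ (a b : ℝ) (t : List ℝ),
      nthDist d M x 0 = a ∧ nthDist d M x 1 = b ∧ a ≤ b ∧
      (∀ u ∈ (b :: t), a ≤ u) ∧ (∀ u ∈ t, b ≤ u) ∧
      M.val.map (d x) = a ::ₘ b ::ₘ (↑t : Multiset ℝ) := by
  have hlen : ((M.val.map (d x)).sort (· ≤ ·)).length = M.card := by
    rw [Multiset.length_sort, Multiset.card_map]; rfl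
  obtain ⟨a, b, t, hlabt⟩ : ∃ a b t, (M.val.map (d x)).sort (· ≤ ·) = a :: b :: t := by
    rcases h : (M.val.map (d x)).sort (· ≤ ·) with _ | ⟨a, _ | ⟨b, t⟩⟩
    · rw [h] at hlen; simp at hlen; omega
    · rw [h] at hlen; simp at hlen; omega
    · exact ⟨a, b, t, rfl⟩
  have hsorted := Multiset.pairwise_sort (M.val.map (d x)) (· ≤ ·)
  rw [hlabt] at hsorted
  rw [List.pairwise_cons] at hsorted
  obtain ⟨ha, hsorted⟩ := hsorted
  rw [List.pairwise_cons] at hsorted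
  obtain ⟨hb, _⟩ := hsorted
  have hms := Multiset.sort_eq (M.val.map (d x)) (· ≤ ·)
  rw [hlabt] at hms
  refine ⟨a, b, t, ?_, ?_, ha b (by simp), ha, hb, ?_⟩
  · unfold nthDist; rw [hlabt]; rfl
  · unfold nthDist; rw [hlabt]; rfl
  · rw [← hms]; simp

lemma mem_of_multiset_map {X : Type*} {d : X → X → ℝ} {M : Finset X} {x : X} {u : ℝ}
    {s : Multiset ℝ} (hml : M.val.map (d x) = s) (hu : u ∈ s) : ∃ m ∈ M, d x m = u := by
  rw [← hml] at hu
  obtain ⟨m, hm, hdm⟩ := Multiset.mem_map.mp hu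
  exact ⟨m, hm, hdm⟩

lemma msil_le_one {X : Type*} {d : X → X → ℝ} {M : Finset X} {x : X}
    (h2 : 2 ≤ M.card) (h0 : ∀ m ∈ M, 0 ≤ d x m) : msil d M x ≤ 1 := by
  obtain ⟨a, b, t, e0, e1, hab, _, _, hml⟩ := sort_two d M x h2
  obtain ⟨ma, hma, hda⟩ := mem_of_multiset_map hml (show a ∈ _ by simp)
  obtain ⟨mb, hmb, hdb⟩ := mem_of_multiset_map hml (show b ∈ _ by simp)
  have ha0 : 0 ≤ a := hda ▸ h0 ma hma
  have hb0 : 0 ≤ b := hdb ▸ h0 mb hmb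
  unfold msil; rw [e0, e1]
  split_ifs with h
  · exact le_rfl
  · have : 0 ≤ a / b := div_nonneg ha0 hb0
    linarith

lemma msil_eq_one {X : Type*} {d : X → X → ℝ} {M : Finset X} {x : X}
    (h2 : 2 ≤ M.card) (h0 : ∀ m ∈ M, 0 ≤ d x m) (hm : ∃ m ∈ M, d x m = 0) :
    msil d M x = 1 := by
  obtain ⟨a, b, t, e0, e1, hab, hmin, _, hml⟩ := sort_two d M x h2
  obtain ⟨m, hmM, hdm⟩ := hm
  have hdmem : d x m ∈ (a ::ₘ b ::ₘ (↑t : Multiset ℝ)) := by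
    rw [← hml]; exact Multiset.mem_map_of_mem _ hmM
  have haled : a ≤ d x m := by
    rcases Multiset.mem_cons.mp hdmem with h | h
    · exact h.ge
    · exact hmin _ (by exact_mod_cast h)
  obtain ⟨ma, hma, hda⟩ := mem_of_multiset_map hml (show a ∈ _ by simp)
  have ha0 : 0 ≤ a := hda ▸ h0 ma hma
  have ha : a = 0 := le_antisymm (hdm ▸ haled) ha0
  unfold msil; rw [e0, e1, ha]
  split_ifs with h
  · rfl
  · rw [zero_div, sub_zero]

lemma msil_le {X : Type*} {d : X → X → ℝ} {M : Finset X} {x : X} {v V : ℝ}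
    (h2 : 2 ≤ M.card) (hv : 0 < v)
    (hlow : ∀ m ∈ M, v ≤ d x m) (hup : ∀ m ∈ M, d x m ≤ V) :
    msil d M x ≤ 1 - v / V := by
  obtain ⟨a, b, t, e0, e1, hab, _, _, hml⟩ := sort_two d M x h2
  obtain ⟨ma, hma, hda⟩ := mem_of_multiset_map hml (show a ∈ _ by simp)
  obtain ⟨mb, hmb, hdb⟩ := mem_of_multiset_map hml (show b ∈ _ by simp)
  have hva : v ≤ a := hda ▸ hlow ma hma
  have hbV : b ≤ V := hdb ▸ hup mb hmb
  unfold msil; rw [e0, e1]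
  have hb0 : 0 < b := lt_of_lt_of_le hv (le_trans hva hab)
  split_ifs with h
  · exact absurd h.1 (by linarith)
  · have : v / V ≤ a / b := div_le_div₀ (by linarith) hva hb0 hbV
    linarith

lemma msil_ge {X : Type*} [DecidableEq X] {d : X → X → ℝ} {M : Finset X} {x : X} {v V : ℝ}
    (h2 : 2 ≤ M.card) (hv : 0 ≤ v) (hV : 0 < V) (h0 : ∀ m ∈ M, 0 ≤ d x m)
    (hm : ∃ m₀ ∈ M, d x m₀ ≤ v ∧ ∀ m ∈ M, m ≠ m₀ → V ≤ d x m) :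
    1 - v / V ≤ msil d M x := by
  obtain ⟨a, b, t, e0, e1, hab, hmin, _, hml⟩ := sort_two d M x h2
  obtain ⟨m₀, hm₀M, hm₀v, hrest⟩ := hm
  -- a ≤ v
  have hdmem : d x m₀ ∈ (a ::ₘ b ::ₘ (↑t : Multiset ℝ)) := by
    rw [← hml]; exact Multiset.mem_map_of_mem _ hm₀M
  have haled : a ≤ d x m₀ := by
    rcases Multiset.mem_cons.mp hdmem with h | h
    · exact h.ge
    · exact hmin _ (by exact_mod_cast h)
  have hav : a ≤ v := le_trans haled hm₀v
  obtain ⟨ma, hma, hda⟩ := mem_of_multiset_map hml (show a ∈ _ by simp)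
  have ha0 : 0 ≤ a := hda ▸ h0 ma hma
  -- V ≤ b
  obtain ⟨ma', hma', hda', hml'⟩ := (Multiset.map_eq_cons (d x) M.val (b ::ₘ (↑t : Multiset ℝ)) a).mpr hml
  have hbmem : b ∈ (M.val.erase ma').map (d x) := by rw [hml']; simp
  obtain ⟨mb', hmb', hdb'⟩ := Multiset.mem_map.mp hbmem
  have hne : mb' ≠ ma' := (M.nodup.mem_erase_iff.mp hmb').1
  have hmb'M : mb' ∈ M := Multiset.mem_of_mem_erase hmb'
  have hVb : V ≤ b := by
    by_cases hc : mb' = m₀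
    · have hman : ma' ≠ m₀ := fun h => hne (hc.trans h.symm)
      have : V ≤ a := hda' ▸ hrest ma' (Finset.mem_def.mpr hma') hman
      linarith
    · exact hdb' ▸ hrest mb' hmb'M hc
  unfold msil; rw [e0, e1]
  have hdiv : a / b ≤ v / V := div_le_div₀ hv hav hV hVb
  split_ifs with h
  · have : 0 ≤ v / V := div_nonneg hv hV.le
    linarith
  · linarith

/-- The Average Medoid Silhouette is rich: every medoid set M ⊊ X with
|M| ≥ 2 is the unique maximizer of the AMS for some dissimilarity. -/
theorem AMS_rich {X : Type*} [Fintype X] [DecidableEq X] (M : Finset X)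
    (hn : 2 ≤ Fintype.card X) (hM : 2 ≤ M.card) (hMne : M.Nonempty)
    (hproper : M ≠ Finset.univ) :
    ∃ d : X → X → ℝ, (∀ x y, 0 ≤ d x y) ∧ (∀ x y, d x y = d y x) ∧ (∀ x, d x x = 0) ∧
      ∀ M' : Finset X, M'.card = M.card → M' ≠ M → AMS d M' < AMS d M := by
  classical
  obtain ⟨m₁, hm₁⟩ := hMne
  set N : ℝ := (Fintype.card X : ℝ) with hN
  have hN2 : (2:ℝ) ≤ N := by rw [hN]; exact_mod_cast hn
  have hN0 : (0:ℝ) < N := by linarith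
  have hNsq : (0:ℝ) < N ^ 2 := by nlinarith
  set d : X → X → ℝ := fun x y =>
    if x = y then 0 else if x ∈ M ∧ y ∈ M then N else if x = m₁ ∨ y = m₁ then 1 else N ^ 2
    with hd
  -- basic properties
  have hd0 : ∀ x y, 0 ≤ d x y := by
    intro x y
    simp only [hd]
    split_ifs <;> nlinarith
  have hdself : ∀ x, d x x = 0 := by intro x; simp [hd]
  have hdsymm : ∀ x y, d x y = d y x := by
    intro x y
    by_cases hxy : x = y
    · subst hxy; rfl
    · simp only [hd, if_neg hxy, if_neg (Ne.symm hxy)]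
      by_cases h2 : x ∈ M ∧ y ∈ M
      · have h2' : y ∈ M ∧ x ∈ M := ⟨h2.2, h2.1⟩
        rw [if_pos h2, if_pos h2']
      · have h2' : ¬(y ∈ M ∧ x ∈ M) := fun h => h2 ⟨h.2, h.1⟩
        rw [if_neg h2, if_neg h2']
        by_cases h3 : x = m₁ ∨ y = m₁
        · have h3' : y = m₁ ∨ x = m₁ := Or.symm h3
          rw [if_pos h3, if_pos h3']
        · have h3' : ¬(y = m₁ ∨ x = m₁) := fun h => h3 (Or.symm h)
          rw [if_neg h3, if_neg h3']
  -- value facts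
  have hdm₁ : ∀ x ∉ M, d x m₁ = 1 := by
    intro x hx
    have hne : x ≠ m₁ := fun h => hx (h ▸ hm₁)
    have c2 : ¬(x ∈ M ∧ m₁ ∈ M) := fun h => hx h.1
    simp only [hd]
    rw [if_neg hne, if_neg c2]
    simp
  have hdout : ∀ x ∉ M, ∀ m ∈ M, m ≠ m₁ → d x m = N ^ 2 := by
    intro x hx m hmM hmne
    have hne : x ≠ m := fun h => hx (h ▸ hmM)
    have c2 : ¬(x ∈ M ∧ m ∈ M) := fun h => hx h.1
    have c3 : ¬(x = m₁ ∨ m = m₁) := fun h => h.elim (fun h1 => hx (h1 ▸ hm₁)) hmne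
    simp only [hd]
    rw [if_neg hne, if_neg c2, if_neg c3]
  have hdMM : ∀ y ∈ M, ∀ m ∈ M, y ≠ m → d y m = N := by
    intro y hy m hm hne
    have c2 : y ∈ M ∧ m ∈ M := ⟨hy, hm⟩
    simp only [hd]
    rw [if_neg hne, if_pos c2]
  have hdMout : ∀ y ∈ M, y ≠ m₁ → ∀ m ∉ M, d y m = N ^ 2 := by
    intro y hy hyne m hm
    have hne : y ≠ m := fun h => hm (h ▸ hy)
    have c2 : ¬(y ∈ M ∧ m ∈ M) := fun h => hm h.2
    have c3 : ¬(y = m₁ ∨ m = m₁) := fun h => h.elim hyne (fun h1 => hm (h1 ▸ hm₁))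
    simp only [hd]
    rw [if_neg hne, if_neg c2, if_neg c3]
  have hdm₁out : ∀ m ∉ M, d m₁ m = 1 := by
    intro m hm; rw [hdsymm]; exact hdm₁ m hm
  refine ⟨d, hd0, hdsymm, hdself, ?_⟩
  intro M' hcard hne
  have hM' : 2 ≤ M'.card := by rw [hcard]; exact hM
  have hk2 : (2:ℝ) ≤ (M.card : ℝ) := by exact_mod_cast hM
  -- lower bound for AMS d M
  have hlb : ∀ x : X, (if x ∈ M then (1:ℝ) else 1 - 1 / N ^ 2) ≤ msil d M x := by
    intro x
    by_cases hx : x ∈ M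
    · rw [if_pos hx]
      exact (msil_eq_one hM (fun m _ => hd0 x m) ⟨x, hx, hdself x⟩).ge
    · rw [if_neg hx]
      have h := msil_ge (d := d) (v := 1) (V := N ^ 2) hM (by norm_num) hNsq
        (fun m _ => hd0 x m)
        ⟨m₁, hm₁, (hdm₁ x hx).le, fun m hmM hmne => (hdout x hx m hmM hmne).ge⟩
      rw [one_div]
      rwa [one_div] at h
  have hsumM : N - 1 / N + (M.card : ℝ) / N ^ 2 ≤ ∑ x : X, msil d M x := by
    have h1 : ∑ x : X, (if x ∈ M then (1:ℝ) else 1 - 1 / N ^ 2) ≤ ∑ x : X, msil d M x :=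
      Finset.sum_le_sum (fun x _ => hlb x)
    have h2 : ∑ x : X, (if x ∈ M then (1:ℝ) else 1 - 1 / N ^ 2)
        = ∑ x : X, ((1 - 1 / N ^ 2) + (if x ∈ M then (1:ℝ) / N ^ 2 else 0)) := by
      apply Finset.sum_congr rfl
      intro x _
      split_ifs <;> ring
    have h3 : ∑ x : X, ((1 - 1 / N ^ 2) + (if x ∈ M then (1:ℝ) / N ^ 2 else 0))
        = N * (1 - 1 / N ^ 2) + (M.card : ℝ) * (1 / N ^ 2) := by
      rw [Finset.sum_add_distrib, Finset.sum_const, Finset.card_univ, Finset.sum_ite_mem,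
        Finset.univ_inter, Finset.sum_const]
      simp [hN, nsmul_eq_mul]
    have h4 : N * (1 - 1 / N ^ 2) + (M.card : ℝ) * (1 / N ^ 2)
        = N - 1 / N + (M.card : ℝ) / N ^ 2 := by
      field_simp
    rw [h2, h3, h4] at h1
    exact h1
  -- a point of M missed by M'
  obtain ⟨y, hyM, hyM'⟩ : ∃ y ∈ M, y ∉ M' := by
    by_contra h
    push_neg at h
    exact hne (Finset.eq_of_subset_of_card_le (fun a ha => h a ha) (by omega)).symm
  -- upper bound for the silhouette of y under M'
  have hybound : msil d M' y ≤ 1 - 1 / N := by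
    by_cases hym : y = m₁
    · have hlow : ∀ m ∈ M', 1 ≤ d y m := by
        intro m hm
        by_cases hmM : m ∈ M
        · rw [hdMM y hyM m hmM (fun h' => hyM' (h' ▸ hm))]; linarith
        · rw [hym, hdm₁out m hmM]
      have hup : ∀ m ∈ M', d y m ≤ N := by
        intro m hm
        by_cases hmM : m ∈ M
        · rw [hdMM y hyM m hmM (fun h' => hyM' (h' ▸ hm))]
        · rw [hym, hdm₁out m hmM]; linarith
      exact msil_le hM' one_pos hlow hup
    · have hlow : ∀ m ∈ M', N ≤ d y m := by
        intro m hm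
        by_cases hmM : m ∈ M
        · rw [hdMM y hyM m hmM (fun h' => hyM' (h' ▸ hm))]
        · rw [hdMout y hyM hym m hmM]; nlinarith
      have hup : ∀ m ∈ M', d y m ≤ N ^ 2 := by
        intro m hm
        by_cases hmM : m ∈ M
        · rw [hdMM y hyM m hmM (fun h' => hyM' (h' ▸ hm))]; nlinarith
        · rw [hdMout y hyM hym m hmM]
      have h := msil_le hM' hN0 hlow hup
      have hNN : N / N ^ 2 = 1 / N := by
        field_simp
      rw [hNN] at h
      exact h
  have hsumM' : ∑ x : X, msil d M' x ≤ N - 1 / N := by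
    have h1 : ∀ x : X, msil d M' x ≤ (1:ℝ) + (if x = y then -(1 / N) else 0) := by
      intro x
      by_cases hxy : x = y
      · rw [if_pos hxy, hxy]; linarith [hybound]
      · rw [if_neg hxy]
        have := msil_le_one (d := d) (M := M') (x := x) hM' (fun m _ => hd0 x m)
        linarith
    have h2 : ∑ x : X, msil d M' x ≤ ∑ x : X, ((1:ℝ) + (if x = y then -(1 / N) else 0)) :=
      Finset.sum_le_sum (fun x _ => h1 x)
    have h3 : ∑ x : X, ((1:ℝ) + (if x = y then -(1 / N) else 0)) = N - 1 / N := by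
      rw [Finset.sum_add_distrib, Finset.sum_const, Finset.card_univ,
        Finset.sum_ite_eq' Finset.univ y (fun _ => -(1 / N))]
      simp [hN, nsmul_eq_mul]
      ring
    linarith
  -- conclude
  have hfin : ∑ x : X, msil d M' x < ∑ x : X, msil d M x := by
    have hpos : (0:ℝ) < (M.card : ℝ) / N ^ 2 := by positivity
    linarith
  unfold AMS
  rw [← hN]
  exact div_lt_div_of_pos_right hfin hN0
end

section
/- Swap change formula, case 1 (nearest medoid replaced, new medoid closer than second nearest): if the medoid removed is the nearest medoid n_1(o) of point x_o and d(o,j) < d_2(o), then the change in Medoid Silhouette of x_o when swapping m_{n_1(o)} with x_j equals d_1(o)/d_2(o) − d(o,j)/d_2(o). -/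
lemma sort_eq_of_coe {s : Multiset ℝ} {l : List ℝ}
    (h : (l : Multiset ℝ) = s) (hl : l.Pairwise (· ≤ ·)) :
    s.sort (· ≤ ·) = l := by
  haveI : IsAntisymm ℝ (· ≤ ·) := ⟨fun _ _ => le_antisymm⟩
  refine (fun hp h1 h2 => List.Perm.eq_of_pairwise' (r := (· ≤ · : ℝ → ℝ → Prop)) h1 h2 hp) ?_ ?_ ?_
  · rw [← Multiset.coe_eq_coe, Multiset.sort_eq, h]
  · exact Multiset.pairwise_sort _ _
  · exact hl

/-- swap change, case 1: the nearest medoid of o is replaced by x_j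
with d(o,j) < d₂(o); the change equals d₁(o)/d₂(o) − d(o,j)/d₂(o). -/
theorem swap_change_case1 {X : Type*} [Fintype X] [DecidableEq X] (d : X → X → ℝ) (M : Finset X)
    (hk : 3 ≤ M.card) (o m j : X) (hm : m ∈ M) (hj : j ∉ M)
    (hinj : Set.InjOn (d o) ↑M)
    (hpos : 0 < nthDist d M o 0) (hposj : 0 < d o j)
    (hnear : d o m = nthDist d M o 0)
    (hoj : d o j < nthDist d M o 1) :
    msil d (insert j (M.erase m)) o - msil d M o
      = nthDist d M o 0 / nthDist d M o 1 - d o j / nthDist d M o 1 := by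
  classical
  have hlen : ((M.val.map (d o)).sort (· ≤ ·)).length = M.card := by
    simp [Multiset.length_sort]
  obtain ⟨x, y, t, hLeq⟩ :
      ∃ x y t, (M.val.map (d o)).sort (· ≤ ·) = x :: y :: t := by
    have h1 : (M.val.map (d o)).sort (· ≤ ·) ≠ [] := by
      intro h; rw [h] at hlen; simp at hlen; omega
    obtain ⟨x, L1, hx⟩ := List.exists_cons_of_ne_nil h1
    have h2 : L1 ≠ [] := by
      intro h; rw [hx, h] at hlen; simp at hlen; omega
    obtain ⟨y, t, hy⟩ := List.exists_cons_of_ne_nil h2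
    exact ⟨x, y, t, by rw [hx, hy]⟩
  have h0 : nthDist d M o 0 = x := by rw [nthDist, hLeq]; rfl
  have h1 : nthDist d M o 1 = y := by rw [nthDist, hLeq]; rfl
  have hsorted : (x :: y :: t).Pairwise (· ≤ ·) := hLeq ▸ Multiset.pairwise_sort _ _
  -- decompose M.val
  have hMval : M.val = m ::ₘ (M.erase m).val := by
    rw [Finset.erase_val]
    exact (Multiset.cons_erase (Finset.mem_val.mpr hm)).symm
  set s : Multiset ℝ := (M.erase m).val.map (d o) with hs
  have hmap : M.val.map (d o) = d o m ::ₘ s := by rw [hMval]; simp [hs]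
  have hcoe : ((x :: y :: t : List ℝ) : Multiset ℝ) = d o m ::ₘ s := by
    rw [← hLeq, Multiset.sort_eq, hmap]
  have hxm : x = d o m := by rw [hnear, h0]
  have hscoe : ((y :: t : List ℝ) : Multiset ℝ) = s := by
    rw [hxm] at hcoe
    have : d o m ::ₘ ((y :: t : List ℝ) : Multiset ℝ) = d o m ::ₘ s := by
      rw [← hcoe]; simp
    exact (Multiset.cons_inj_right _).mp this
  -- new finset
  have hjnot : j ∉ M.erase m := fun h => hj (Finset.mem_of_mem_erase h)
  have hnewval : (insert j (M.erase m)).val = j ::ₘ (M.erase m).val :=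
    Finset.insert_val_of_notMem hjnot
  have hnewmap : (insert j (M.erase m)).val.map (d o) = d o j ::ₘ s := by
    rw [hnewval]; simp [hs]
  -- sortedness facts
  rw [List.pairwise_cons] at hsorted
  obtain ⟨hxle, hsorted'⟩ := hsorted
  have hyt : ∀ z ∈ (y :: t : List ℝ), d o j ≤ z := by
    intro z hz
    rcases List.mem_cons.mp hz with rfl | hz
    · exact le_of_lt (h1 ▸ hoj)
    · calc d o j ≤ y := le_of_lt (h1 ▸ hoj)
        _ ≤ z := (List.pairwise_cons.mp hsorted').1 z hz
  have hnewsort : ((d o j ::ₘ s).sort (· ≤ ·)) = d o j :: y :: t := by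
    apply sort_eq_of_coe
    · rw [← hscoe]; simp
    · exact List.pairwise_cons.mpr ⟨hyt, hsorted'⟩
  have h0' : nthDist d (insert j (M.erase m)) o 0 = d o j := by
    rw [nthDist, hnewmap, hnewsort]; rfl
  have h1' : nthDist d (insert j (M.erase m)) o 1 = y := by
    rw [nthDist, hnewmap, hnewsort]; rfl
  rw [msil, msil, h0, h1, h0', h1']
  rw [if_neg, if_neg]
  · ring
  · rw [h0] at hpos
    exact fun h => (ne_of_gt hpos) h.1
  · exact fun h => (ne_of_gt hposj) h.1
end

section
/- Swap change formula, case 2 (nearest medoid replaced, new medoid farther than second but closer than third nearest): if m_i = n_1(o) and d_2(o) ≤ d(o,j) < d_3(o), then Δs̃_o = d_1(o)/d_2(o) − d_2(o)/d(o,j). -/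
/-- swap change, case 2: nearest medoid replaced,
d₂(o) ≤ d(o,j) < d₃(o); change equals d₁/d₂ − d₂/d(o,j). -/
theorem swap_change_case2 {X : Type*} [Fintype X] [DecidableEq X] (d : X → X → ℝ) (M : Finset X)
    (hk : 3 ≤ M.card) (o m j : X) (hm : m ∈ M) (hj : j ∉ M)
    (hinj : Set.InjOn (d o) ↑M)
    (hpos : 0 < nthDist d M o 0) (hposj : 0 < d o j)
    (hnear : d o m = nthDist d M o 0)
    (hoj1 : nthDist d M o 1 ≤ d o j) (hoj2 : d o j < nthDist d M o 2) :
    msil d (insert j (M.erase m)) o - msil d M o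
      = nthDist d M o 0 / nthDist d M o 1 - nthDist d M o 1 / d o j := by
  classical
  set L := (M.val.map (d o)).sort (· ≤ ·) with hL
  have hsortL : L.Pairwise (· ≤ ·) := Multiset.pairwise_sort _ _
  have hlen : L.length = M.card := by
    rw [hL, Multiset.length_sort, Multiset.card_map]; rfl
  have hlen3 : 3 ≤ L.length := hlen ▸ hk
  obtain ⟨a, b, c, t, hLeq⟩ : ∃ a b c t, L = a :: b :: c :: t := by
    match L, hlen3 with
    | a :: b :: c :: t, _ => exact ⟨a, b, c, t, rfl⟩
  have h0 : nthDist d M o 0 = a := by rw [nthDist, ← hL, hLeq]; rfl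
  have h1 : nthDist d M o 1 = b := by rw [nthDist, ← hL, hLeq]; rfl
  have h2 : nthDist d M o 2 = c := by rw [nthDist, ← hL, hLeq]; rfl
  have hcoeL : (L : Multiset ℝ) = M.val.map (d o) := Multiset.sort_eq _ _
  have hMv : M.val = m ::ₘ M.val.erase m := (Multiset.cons_erase (show m ∈ M.val from hm)).symm
  have hT : M.val.map (d o) = a ::ₘ (M.val.erase m).map (d o) := by
    conv_lhs => rw [hMv]
    rw [Multiset.map_cons, hnear, h0]
  have hTbc : ((M.val.erase m).map (d o)) = (↑(b :: c :: t) : Multiset ℝ) := by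
    have : (↑(a :: b :: c :: t) : Multiset ℝ) = a ::ₘ (M.val.erase m).map (d o) := by
      rw [← hLeq, hcoeL, hT]
    rw [← Multiset.cons_coe] at this
    exact (Multiset.cons_inj_right a).1 this.symm
  -- new medoid set multiset
  have hjE : j ∉ M.erase m := fun h => hj (Finset.mem_of_mem_erase h)
  have hM' : (insert j (M.erase m)).val.map (d o) = (↑(d o j :: b :: c :: t) : Multiset ℝ) := by
    rw [Finset.insert_val_of_notMem hjE, Multiset.map_cons, Finset.erase_val, hTbc]
    rfl
  have hboj : b ≤ d o j := h1 ▸ hoj1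
  have hojc : d o j ≤ c := le_of_lt (h2 ▸ hoj2)
  have hsbct : (b :: c :: t).Pairwise (· ≤ ·) := by
    rw [hLeq] at hsortL; exact hsortL.tail
  have hsorted' : (b :: d o j :: c :: t).Pairwise (· ≤ ·) := by
    rcases List.pairwise_cons.1 hsbct with ⟨hb, hct⟩
    refine List.pairwise_cons.2 ⟨?_, List.pairwise_cons.2 ⟨?_, hct⟩⟩
    · intro x hx
      rcases List.mem_cons.1 hx with h | h
      · exact h ▸ hboj
      · exact hb x h
    · intro x hx
      rcases List.mem_cons.1 hx with h | h
      · exact h ▸ hojc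
      · exact hojc.trans ((List.pairwise_cons.1 hct).1 x h)
  have hsortEq : ((insert j (M.erase m)).val.map (d o)).sort (· ≤ ·)
      = b :: d o j :: c :: t := by
    apply List.Perm.eq_of_pairwise' (Multiset.pairwise_sort _ _) hsorted'
    rw [← Multiset.coe_eq_coe, Multiset.sort_eq, hM']
    rw [Multiset.coe_eq_coe]
    exact List.Perm.swap _ _ _
  have h0' : nthDist d (insert j (M.erase m)) o 0 = b := by rw [nthDist, hsortEq]; rfl
  have h1' : nthDist d (insert j (M.erase m)) o 1 = d o j := by rw [nthDist, hsortEq]; rfl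
  have ha : a ≠ 0 := ne_of_gt (h0 ▸ hpos)
  have hoj0 : d o j ≠ 0 := ne_of_gt hposj
  rw [msil, msil, h0, h1, h0', h1']
  rw [if_neg (fun h => hoj0 h.2), if_neg (fun h => ha h.1)]
  ring
end

section
/- Swap change formula, case 3 (nearest medoid replaced, new medoid farther than third nearest): if m_i = n_1(o) and d(o,j) ≥ d_3(o), then Δs̃_o = d_1(o)/d_2(o) − d_2(o)/d_3(o). -/
/-- swap change, case 3: nearest medoid replaced, d(o,j) ≥ d₃(o);
change equals d₁/d₂ − d₂/d₃. -/
theorem swap_change_case3 {X : Type*} [Fintype X] [DecidableEq X] (d : X → X → ℝ) (M : Finset X)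
    (hk : 3 ≤ M.card) (o m j : X) (hm : m ∈ M) (hj : j ∉ M)
    (hinj : Set.InjOn (d o) ↑M)
    (hpos : 0 < nthDist d M o 0) (hposj : 0 < d o j)
    (hnear : d o m = nthDist d M o 0)
    (hoj : nthDist d M o 2 ≤ d o j) :
    msil d (insert j (M.erase m)) o - msil d M o
      = nthDist d M o 0 / nthDist d M o 1 - nthDist d M o 1 / nthDist d M o 2 := by
  classical
  set L : List ℝ := ((M.val.map (d o)).sort (· ≤ ·)) with hLdef
  have hLsorted : L.Pairwise (· ≤ ·) := Multiset.pairwise_sort _ _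
  have hLcoe : (↑L : Multiset ℝ) = M.val.map (d o) := Multiset.sort_eq _ _
  have hLlen : L.length = M.card := by
    rw [← Multiset.coe_card, hLcoe, Multiset.card_map]; rfl
  have hLnd : L.Nodup := by
    have : (↑L : Multiset ℝ).Nodup := by
      rw [hLcoe]
      exact Multiset.Nodup.map_on (fun x hx y hy h => hinj (by simpa using hx) (by simpa using hy) h) M.nodup
    simpa using this
  have hlen3 : 3 ≤ L.length := by omega
  obtain ⟨a, l1, h1⟩ := List.exists_cons_of_ne_nil (l := L)
    (by rintro h; rw [h] at hlen3; simp at hlen3)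
  obtain ⟨b, l2, h2⟩ := List.exists_cons_of_ne_nil (l := l1)
    (by rintro h; rw [h1, h] at hlen3; simp at hlen3)
  obtain ⟨c, l3, h3⟩ := List.exists_cons_of_ne_nil (l := l2)
    (by rintro h; rw [h1, h2, h] at hlen3; simp at hlen3)
  have hLeq : L = a :: b :: c :: l3 := by rw [h1, h2, h3]
  -- basic facts
  have hd0 : nthDist d M o 0 = a := by simp only [nthDist, ← hLdef, hLeq]; rfl
  have hd1 : nthDist d M o 1 = b := by simp only [nthDist, ← hLdef, hLeq]; rfl
  have hd2 : nthDist d M o 2 = c := by simp only [nthDist, ← hLdef, hLeq]; rfl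
  rw [hLeq] at hLsorted hLnd
  have htail : (b :: c :: l3).Pairwise (· ≤ ·) := hLsorted.of_cons
  simp only [List.pairwise_cons, List.mem_cons, List.nodup_cons] at hLsorted hLnd
  have hab : a ≤ b := hLsorted.1 b (Or.inl rfl)
  have hbc : b ≤ c := hLsorted.2.1 c (Or.inl rfl)
  have hbne : b ≠ c := fun h => hLnd.2.1 (Or.inl h)
  have hcj : c ≤ d o j := by rwa [hd2] at hoj
  -- the new multiset of distances
  have hjm : j ∉ M.erase m := fun h => hj (Finset.mem_of_mem_erase h)
  have hval : (insert j (M.erase m)).val = j ::ₘ (M.val.erase m) := by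
    rw [Finset.insert_val_of_notMem hjm, Finset.erase_val]
  have hMval : M.val = m ::ₘ M.val.erase m := (Multiset.cons_erase (by exact hm)).symm
  have hT : (M.val.erase m).map (d o) = ↑(b :: c :: l3) := by
    have hS : M.val.map (d o) = d o m ::ₘ (M.val.erase m).map (d o) := by
      conv_lhs => rw [hMval]
      rw [Multiset.map_cons]
    have hS2 : M.val.map (d o) = a ::ₘ ↑(b :: c :: l3) := by
      rw [← hLcoe, hLeq]; rfl
    have hma : d o m = a := by rw [hnear, hd0]
    rw [hma] at hS
    exact (Multiset.cons_inj_right a).mp (hS.symm.trans hS2)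
  have hS' : (insert j (M.erase m)).val.map (d o) = ↑(d o j :: b :: c :: l3) := by
    rw [hval, Multiset.map_cons, hT]; rfl
  -- sorted form of the new list
  set C : List ℝ := List.orderedInsert (· ≤ ·) (d o j) (b :: c :: l3) with hCdef
  have hCperm : List.Perm C (d o j :: b :: c :: l3) := List.perm_orderedInsert _ _ _
  have hCsorted : C.Pairwise (· ≤ ·) := by
    exact htail.orderedInsert _ _
  have hsortC : ((insert j (M.erase m)).val.map (d o)).sort (· ≤ ·) = C := by
    apply List.Perm.eq_of_pairwise' (Multiset.pairwise_sort _ _) hCsorted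
    rw [← Multiset.coe_eq_coe, Multiset.sort_eq, hS', Multiset.coe_eq_coe]
    exact hCperm.symm
  have hnjb : ¬ d o j ≤ b := by
    intro h
    exact hbne (le_antisymm hbc (hcj.trans h))
  have hC0 : C.getD 0 0 = b := by
    rw [hCdef, List.orderedInsert, if_neg hnjb]; rfl
  have hC1 : C.getD 1 0 = c := by
    rw [hCdef, List.orderedInsert, if_neg hnjb, List.orderedInsert]
    by_cases h : d o j ≤ c
    · rw [if_pos h]; simpa using le_antisymm h hcj
    · rw [if_neg h]; rfl
  have hn0 : nthDist d (insert j (M.erase m)) o 0 = b := by simp only [nthDist, hsortC, hC0]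
  have hn1 : nthDist d (insert j (M.erase m)) o 1 = c := by simp only [nthDist, hsortC, hC1]
  have ha : 0 < a := by rwa [hd0] at hpos
  have hb : 0 < b := ha.trans_le hab
  have hc : 0 < c := hb.trans_le hbc
  rw [msil, msil, if_neg (by rw [hn0]; exact fun h => hb.ne' h.1),
    if_neg (by rw [hd0]; exact fun h => ha.ne' h.1), hn0, hn1, hd0, hd1, hd2]
  ring
end

section
/- Swap change formula, case 4 (second nearest medoid replaced by a point closer than the current nearest): if m_i = n_2(o) and d(o,j) < d_1(o), then Δs̃_o = d_1(o)/d_2(o) − d(o,j)/d_1(o). -/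
/-- swap change, case 4: the second nearest medoid is replaced by a point
closer than the nearest; change equals d₁/d₂ − d(o,j)/d₁. -/
theorem swap_change_case4 {X : Type*} [Fintype X] [DecidableEq X] (d : X → X → ℝ) (M : Finset X)
    (hk : 3 ≤ M.card) (o m j : X) (hm : m ∈ M) (hj : j ∉ M)
    (hinj : Set.InjOn (d o) ↑M)
    (hpos : 0 < nthDist d M o 0) (hposj : 0 < d o j)
    (hsecond : d o m = nthDist d M o 1)
    (hoj : d o j < nthDist d M o 0) :
    msil d (insert j (M.erase m)) o - msil d M o
      = nthDist d M o 0 / nthDist d M o 1 - d o j / nthDist d M o 0 := by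
  classical
  set L := ((M.val.map (d o)).sort (· ≤ ·)) with hLdef
  have hcoe : (L : Multiset ℝ) = M.val.map (d o) := Multiset.sort_eq _ _
  have hlen : L.length = M.card := by
    rw [hLdef, Multiset.length_sort, Multiset.card_map]; rfl
  have hsort : L.Pairwise (· ≤ ·) := Multiset.pairwise_sort _ _
  obtain ⟨a, b, t, hLeq⟩ : ∃ a b t, L = a :: b :: t := by
    match L, hlen with
    | a :: b :: t, _ => exact ⟨a, b, t, rfl⟩
    | [], h => simp at h; omega
    | [a], h => simp at h; omega
  have hd1 : nthDist d M o 0 = a := by rw [nthDist, ← hLdef, hLeq]; rfl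
  have hd2 : nthDist d M o 1 = b := by rw [nthDist, ← hLdef, hLeq]; rfl
  -- decompose the multiset of distances
  have hmv : m ∈ M.val := hm
  have hS : M.val.map (d o) = d o m ::ₘ (M.val.erase m).map (d o) := by
    rw [← Multiset.map_cons, Multiset.cons_erase hmv]
  have hdom : d o m = b := hsecond.trans hd2
  have hX : (b ::ₘ (M.val.erase m).map (d o)) = a ::ₘ b ::ₘ (t : Multiset ℝ) := by
    have : (d o m ::ₘ (M.val.erase m).map (d o)) = a ::ₘ b ::ₘ (t : Multiset ℝ) := by
      rw [← hS, ← hcoe, hLeq]; rfl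
    rwa [hdom] at this
  have herase : (M.val.erase m).map (d o) = a ::ₘ (t : Multiset ℝ) := by
    rw [← Multiset.cons_swap] at hX
    exact (Multiset.cons_inj_right b).mp hX
  -- new multiset
  have hjmem : j ∉ M.erase m := fun h => hj (Finset.mem_of_mem_erase h)
  have hnewS : (insert j (M.erase m)).val.map (d o)
      = ((d o j :: a :: t : List ℝ) : Multiset ℝ) := by
    rw [Finset.insert_val_of_notMem hjmem, Finset.erase_val, Multiset.map_cons, herase]
    rfl
  -- the candidate list is sorted
  have hja : d o j ≤ a := le_of_lt (hd1 ▸ hoj)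
  have hsort' : (d o j :: a :: t).Pairwise (· ≤ ·) := by
    rw [hLeq, List.pairwise_cons, List.pairwise_cons] at hsort
    obtain ⟨h1, h2, h3⟩ := hsort
    have hat : ∀ x ∈ t, a ≤ x := fun x hx => h1 x (by simp [hx])
    rw [List.pairwise_cons, List.pairwise_cons]
    refine ⟨?_, hat, h3⟩
    intro x hx
    rw [List.mem_cons] at hx
    rcases hx with rfl | hx
    · exact hja
    · exact hja.trans (hat x hx)
  have hsorteq : ((insert j (M.erase m)).val.map (d o)).sort (· ≤ ·) = d o j :: a :: t := by
    apply List.Perm.eq_of_pairwise' (Multiset.pairwise_sort _ _) hsort'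
    rw [← Multiset.coe_eq_coe, Multiset.sort_eq, hnewS]
  have hn0 : nthDist d (insert j (M.erase m)) o 0 = d o j := by rw [nthDist, hsorteq]; rfl
  have hn1 : nthDist d (insert j (M.erase m)) o 1 = a := by rw [nthDist, hsorteq]; rfl
  rw [msil, msil, hn0, hn1, hd1, hd2, if_neg, if_neg]
  · ring
  · exact fun h => (hd1 ▸ hpos).ne' h.1
  · exact fun h => hposj.ne' h.1
end

section
/- Swap change formula, case 5 (neither nearest nor second nearest replaced, new medoid becomes nearest): if m_i ∉ {n_1(o), n_2(o)} and d(o,j) < d_1(o), then Δs̃_o = d_1(o)/d_2(o) − d(o,j)/d_1(o). -/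
/-- swap change, case 5: a medoid that is neither the nearest nor the
second nearest of o is replaced, and the new medoid becomes the nearest;
change equals d₁/d₂ − d(o,j)/d₁. -/
theorem swap_change_case5 {X : Type*} [Fintype X] [DecidableEq X] (d : X → X → ℝ) (M : Finset X)
    (hk : 3 ≤ M.card) (o m j : X) (hm : m ∈ M) (hj : j ∉ M)
    (hinj : Set.InjOn (d o) ↑M)
    (hpos : 0 < nthDist d M o 0) (hposj : 0 < d o j)
    (hfar : nthDist d M o 1 < d o m)
    (hoj : d o j < nthDist d M o 0) :
    msil d (insert j (M.erase m)) o - msil d M o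
      = nthDist d M o 0 / nthDist d M o 1 - d o j / nthDist d M o 0 := by
  classical
  set T : Multiset ℝ := M.val.map (d o) with hT
  set s : List ℝ := T.sort (· ≤ ·) with hsdef
  have hcoe : (↑s : Multiset ℝ) = T := Multiset.sort_eq _ _
  have hsort : s.Pairwise (· ≤ ·) := Multiset.pairwise_sort _ _
  have hlen : s.length = M.card := by
    rw [hsdef, Multiset.length_sort, hT, Multiset.card_map]; rfl
  -- decompose s
  obtain ⟨a, b, t, hs⟩ : ∃ a b t, s = a :: b :: t := by
    match hseq : s, (hlen ▸ hk : 3 ≤ s.length) with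
    | a :: b :: t, _ => exact ⟨a, b, t, rfl⟩
  have hn0 : nthDist d M o 0 = a := by show s.getD 0 0 = a; rw [hs]; rfl
  have hn1 : nthDist d M o 1 = b := by show s.getD 1 0 = b; rw [hs]; rfl
  rw [hn0] at hpos hoj
  rw [hn1] at hfar
  have hab : a ≤ b := (List.pairwise_cons.mp (hs ▸ hsort)).1 b (by simp)
  -- every element of s is ≥ a
  have hmin : ∀ x ∈ s, a ≤ x := by
    intro x hx
    rw [hs, List.mem_cons] at hx
    rcases hx with rfl | hx
    · exact le_refl _
    · exact (List.pairwise_cons.mp (hs ▸ hsort)).1 x hx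
  -- the new multiset of distances
  have hjm : j ∉ M.erase m := fun h => hj (Finset.mem_of_mem_erase h)
  have hT' : (insert j (M.erase m)).val.map (d o) = d o j ::ₘ T.erase (d o m) := by
    rw [Finset.insert_val_of_notMem hjm, Finset.erase_val, Multiset.map_cons]
    congr 1
    have hmv : M.val = m ::ₘ M.val.erase m := (Multiset.cons_erase hm).symm
    rw [hT]
    conv_rhs => rw [hmv, Multiset.map_cons, Multiset.erase_cons_head]
  -- the new sorted list
  have hdm_mem : d o m ∈ s := by
    rw [← Multiset.mem_coe, hcoe, hT]
    exact Multiset.mem_map_of_mem _ hm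
  have hnews : (d o j ::ₘ T.erase (d o m)).sort (· ≤ ·) = d o j :: s.erase (d o m) := by
    refine (fun hp h1 h2 => List.Perm.eq_of_pairwise' h1 h2 hp) ?_ (Multiset.pairwise_sort _ _) ?_
    · rw [← Multiset.coe_eq_coe, Multiset.sort_eq, ← Multiset.cons_coe, ← Multiset.coe_erase, hcoe]
    · refine List.pairwise_cons.mpr ⟨?_, hsort.erase _⟩
      intro x hx
      exact le_of_lt (lt_of_lt_of_le hoj (hmin x ((s.erase_sublist (a := d o m)).mem hx)))
  have herase : s.erase (d o m) = a :: ((b :: t).erase (d o m)) := by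
    rw [hs]
    refine List.erase_cons_tail ?_
    simp only [beq_iff_eq]
    intro h
    exact absurd hab (not_le.mpr (by rw [h]; exact hfar))
  have hn0' : nthDist d (insert j (M.erase m)) o 0 = d o j := by
    unfold nthDist
    rw [hT', hnews]
    simp [List.getD]
  have hn1' : nthDist d (insert j (M.erase m)) o 1 = a := by
    unfold nthDist
    rw [hT', hnews, herase]
    simp [List.getD]
  have hbpos : 0 < b := lt_of_lt_of_le hpos hab
  rw [msil, msil, hn0, hn1, hn0', hn1']
  rw [if_neg (by rintro ⟨h, _⟩; exact absurd h (ne_of_gt hposj)),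
    if_neg (by rintro ⟨h, _⟩; exact absurd h (ne_of_gt hpos))]
  ring
end

section
/- Swap change formula, case 6 (neither of the two nearest replaced, new medoid farther than second nearest): if m_i ∉ {n_1(o), n_2(o)} and d(o,j) ≥ d_2(o), then Δs̃_o = 0. -/
lemma sort_cons_cons (x0 x1 : ℝ) (r : Multiset ℝ) (h01 : x0 ≤ x1)
    (hr : ∀ y ∈ r, x1 ≤ y) :
    Multiset.sort (x0 ::ₘ x1 ::ₘ r) (· ≤ ·) = x0 :: x1 :: Multiset.sort r (· ≤ ·) := by
  refine (fun hp h1 h2 => List.Perm.eq_of_pairwise' h1 h2 hp) ?_ (Multiset.pairwise_sort _ (· ≤ ·)) ?_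
  · rw [← Multiset.coe_eq_coe, Multiset.sort_eq]
    rw [← Multiset.cons_coe, ← Multiset.cons_coe, Multiset.sort_eq]
  · rw [List.pairwise_cons]
    refine ⟨?_, ?_⟩
    · intro b hb
      rcases List.mem_cons.mp hb with h | h
      · exact h ▸ h01
      · exact le_trans h01 (hr b (by rwa [← Multiset.mem_sort (r := (· ≤ ·))]))
    · rw [List.pairwise_cons]
      exact ⟨fun b hb => hr b (by rwa [← Multiset.mem_sort (r := (· ≤ ·))]),
        Multiset.pairwise_sort _ _⟩

/-- swap change, case 6: a medoid that is neither of the two nearest of o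
is replaced and the new medoid is farther than the second nearest; change is 0. -/
theorem swap_change_case6 {X : Type*} [Fintype X] [DecidableEq X] (d : X → X → ℝ) (M : Finset X)
    (hk : 3 ≤ M.card) (o m j : X) (hm : m ∈ M) (hj : j ∉ M)
    (hinj : Set.InjOn (d o) ↑M)
    (hpos : 0 < nthDist d M o 0) (hposj : 0 < d o j)
    (hfar : nthDist d M o 1 < d o m)
    (hoj : nthDist d M o 1 ≤ d o j) :
    msil d (insert j (M.erase m)) o - msil d M o = 0 := by
  classical
  set t : Multiset ℝ := M.val.map (d o) with ht
  have hcard : (Multiset.sort t (· ≤ ·)).length = M.card := by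
    rw [Multiset.length_sort, ht, Multiset.card_map]; rfl
  obtain ⟨a, b, rest, hs⟩ : ∃ a b rest, Multiset.sort t (· ≤ ·) = a :: b :: rest := by
    rcases h : Multiset.sort t (· ≤ ·) with _ | ⟨a, _ | ⟨b, rest⟩⟩
    · rw [h] at hcard; simp at hcard; omega
    · rw [h] at hcard; simp at hcard; omega
    · exact ⟨a, b, rest, rfl⟩
  have hsorted := Multiset.pairwise_sort t (· ≤ ·)
  rw [hs, List.pairwise_cons, List.pairwise_cons] at hsorted
  obtain ⟨hab, hbr, -⟩ := hsorted
  have hab' : a ≤ b := hab b List.mem_cons_self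
  have ha0 : nthDist d M o 0 = a := by rw [nthDist, ← ht, hs]; rfl
  have hb1 : nthDist d M o 1 = b := by rw [nthDist, ← ht, hs]; rfl
  rw [hb1] at hfar hoj
  have ht2 : t = a ::ₘ b ::ₘ (↑rest : Multiset ℝ) := by
    rw [← Multiset.sort_eq t (· ≤ ·), hs, ← Multiset.cons_coe, ← Multiset.cons_coe]
  have hmt : d o m ∈ t := Multiset.mem_map_of_mem _ (Finset.mem_val.mpr hm)
  have hdm_rest : d o m ∈ rest := by
    rw [ht2] at hmt
    rcases Multiset.mem_cons.mp hmt with h | h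
    · exact absurd h (by intro h; linarith)
    rcases Multiset.mem_cons.mp h with h | h
    · exact absurd h (by intro h; linarith)
    · exact Multiset.mem_coe.mp h
  set q : Multiset ℝ := (↑rest : Multiset ℝ).erase (d o m) with hq
  have hrest : (↑rest : Multiset ℝ) = d o m ::ₘ q :=
    (Multiset.cons_erase (Multiset.mem_coe.mpr hdm_rest)).symm
  have hbq : ∀ y ∈ q, b ≤ y := fun y hy =>
    hbr y (Multiset.mem_coe.mp (Multiset.mem_of_mem_erase hy))
  -- decompose t through m
  set r0 : Multiset ℝ := (M.val.erase m).map (d o) with hr0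
  have ht3 : t = d o m ::ₘ r0 := by
    rw [ht, hr0, ← Multiset.map_cons, Multiset.cons_erase (Finset.mem_val.mpr hm)]
  have hr0eq : r0 = a ::ₘ b ::ₘ q := by
    have : d o m ::ₘ r0 = d o m ::ₘ (a ::ₘ b ::ₘ q) := by
      rw [← ht3, ht2, hrest]
      rw [Multiset.cons_swap b (d o m), Multiset.cons_swap a (d o m)]
    exact (Multiset.cons_inj_right _).mp this
  -- the new multiset
  have hjm : j ∉ M.erase m := fun h => hj (Finset.mem_of_mem_erase h)
  have ht' : (insert j (M.erase m)).val.map (d o) = a ::ₘ b ::ₘ (d o j ::ₘ q) := by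
    rw [Finset.insert_val_of_notMem hjm, Finset.erase_val, Multiset.map_cons, ← hr0, hr0eq]
    rw [Multiset.cons_swap (d o j) a, Multiset.cons_swap (d o j) b]
  have hsort' := sort_cons_cons a b (d o j ::ₘ q) hab'
    (by intro y hy
        rcases Multiset.mem_cons.mp hy with h | h
        · exact h ▸ hoj
        · exact hbq y h)
  have ha0' : nthDist d (insert j (M.erase m)) o 0 = a := by
    rw [nthDist, ht', hsort']; rfl
  have hb1' : nthDist d (insert j (M.erase m)) o 1 = b := by
    rw [nthDist, ht', hsort']; rfl
  rw [msil, msil, ha0, hb1, ha0', hb1', sub_self]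
end

section
/- The total swap change decomposes: for a swap replacing medoid m_i by non-medoid x_j, the summed change n·ΔS̃ over all points equals ΔS̃^{−m_i} + ΔS̃^{+x_j} plus correction terms that vanish for every point whose nearest and second nearest medoids are both different from m_i; i.e., for any point o with n_1(o) ≠ i and n_2(o) ≠ i, the contribution of o to n·ΔS̃ equals its contribution to ΔS̃^{+x_j}. -/
/-- decomposition of the total swap change: for any point o whose nearest
and second nearest medoids both differ from the removed medoid m, the contribution of o
to n·ΔS̃ equals its contribution to ΔS̃^{+x_j}. -/
theorem swap_change_decomposition {X : Type*} [Fintype X] [DecidableEq X] (d : X → X → ℝ) (M : Finset X)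
    (hk : 3 ≤ M.card) (o m j : X) (hm : m ∈ M) (hj : j ∉ M)
    (hinj : Set.InjOn (d o) ↑M)
    (hpos : 0 < nthDist d M o 0) (hposj : 0 < d o j)
    (hfar : nthDist d M o 1 < d o m) :
    msil d (insert j (M.erase m)) o - msil d M o
      = if d o j < nthDist d M o 0 then
          nthDist d M o 0 / nthDist d M o 1 - d o j / nthDist d M o 0
        else if d o j < nthDist d M o 1 then
          nthDist d M o 0 / nthDist d M o 1 - nthDist d M o 0 / d o j
        else 0 := by
  classical
  set a := d o j with ha
  set T : Multiset ℝ := M.val.map (d o) with hT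
  have hLsorted : (T.sort (· ≤ ·)).Pairwise (· ≤ ·) := Multiset.pairwise_sort _ _
  have hLcoe : ((T.sort (· ≤ ·) : List ℝ) : Multiset ℝ) = T := Multiset.sort_eq _ _
  have hLlen : 3 ≤ (T.sort (· ≤ ·)).length := by
    rw [Multiset.length_sort, hT, Multiset.card_map]; exact hk
  obtain ⟨d0, d1, rest, hL⟩ :
      ∃ d0 d1 rest, T.sort (· ≤ ·) = d0 :: d1 :: rest := by
    rcases hLl : T.sort (· ≤ ·) with _ | ⟨x, _ | ⟨y, r⟩⟩
    · rw [hLl] at hLlen; simp at hLlen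
    · rw [hLl] at hLlen; simp at hLlen
    · exact ⟨x, y, r, rfl⟩
  have hn0 : nthDist d M o 0 = d0 := by rw [nthDist, ← hT, hL]; rfl
  have hn1 : nthDist d M o 1 = d1 := by rw [nthDist, ← hT, hL]; rfl
  rw [hn0] at hpos
  rw [hn1] at hfar
  rw [hn0, hn1]
  rw [hL] at hLsorted
  have h01 : d0 ≤ d1 := by
    rcases List.pairwise_cons.mp hLsorted with ⟨h, -⟩
    exact h d1 (by simp)
  have hrest : ∀ x ∈ rest, d1 ≤ x := by
    rcases List.pairwise_cons.mp hLsorted with ⟨-, h⟩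
    exact (List.pairwise_cons.mp h).1
  have hd1pos : 0 < d1 := lt_of_lt_of_le hpos h01
  have hne0 : d0 ≠ d o m := ne_of_lt (lt_of_le_of_lt h01 hfar)
  have hne1 : d1 ≠ d o m := ne_of_lt hfar
  -- erased multiset
  have hmv : m ∈ M.val := hm
  have hT' : T = d o m ::ₘ (M.val.erase m).map (d o) := by
    rw [hT]
    conv_lhs => rw [← Multiset.cons_erase hmv]
    rw [Multiset.map_cons]
  have hTE : T.erase (d o m) = (M.val.erase m).map (d o) := by
    rw [hT', Multiset.erase_cons_head]
  -- list erase
  have hLe : ((T.sort (· ≤ ·)).erase (d o m)) = d0 :: d1 :: rest.erase (d o m) := by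
    rw [hL, List.erase_cons_tail, List.erase_cons_tail]
    · simp [hne1]
    · simp [hne0]
  have hEsorted : (d0 :: d1 :: rest.erase (d o m)).Pairwise (· ≤ ·) := by
    rw [← hLe, hL]
    exact hLsorted.sublist List.erase_sublist
  have hEcoe : ((d0 :: d1 :: rest.erase (d o m) : List ℝ) : Multiset ℝ) = T.erase (d o m) := by
    rw [← hLe, ← Multiset.coe_erase, hLcoe]
  -- new multiset
  have hM' : (insert j (M.erase m)).val.map (d o) = a ::ₘ T.erase (d o m) := by
    have hj' : j ∉ M.erase m := fun h => hj (Finset.mem_of_mem_erase h)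
    rw [Finset.insert_val_of_notMem hj', Multiset.map_cons, Finset.erase_val, hTE, ha]
  set C : List ℝ := List.orderedInsert (· ≤ ·) a (d0 :: d1 :: rest.erase (d o m)) with hC
  have hCsorted : C.Pairwise (· ≤ ·) := hEsorted.orderedInsert a _
  have hCperm : List.Perm C (a :: d0 :: d1 :: rest.erase (d o m)) := List.perm_orderedInsert _ _ _
  have hsort' : ((insert j (M.erase m)).val.map (d o)).sort (· ≤ ·) = C := by
    apply List.Perm.eq_of_pairwise' (Multiset.pairwise_sort _ _) hCsorted
    apply Multiset.coe_eq_coe.mp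
    rw [Multiset.sort_eq, hM', ← hEcoe, ← Multiset.cons_coe]
    exact (Multiset.coe_eq_coe.mpr hCperm).symm
  have hnd : ∀ n, nthDist d (insert j (M.erase m)) o n = C.getD n 0 := by
    intro n; rw [nthDist, hsort']
  -- msil of M
  have hmsM : msil d M o = 1 - d0 / d1 := by
    rw [msil, if_neg, hn0, hn1]
    rw [hn0, hn1]
    rintro ⟨h, -⟩; exact hpos.ne' h
  -- case analysis
  rcases le_or_gt a d0 with h1 | h1
  · have hCeq : C = a :: d0 :: d1 :: rest.erase (d o m) := by
      rw [hC, List.orderedInsert, if_pos h1]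
    have hms' : msil d (insert j (M.erase m)) o = 1 - a / d0 := by
      rw [msil, if_neg, hnd 0, hnd 1, hCeq] <;>
        simp [hnd, hCeq, hposj.ne']
    rw [hms', hmsM]
    rcases lt_or_eq_of_le h1 with h1' | h1'
    · rw [if_pos h1']; ring
    · subst h1'
      rw [if_neg (lt_irrefl a)]
      rcases lt_or_eq_of_le h01 with h2 | h2
      · rw [if_pos h2]; ring
      · rw [← h2, if_neg (lt_irrefl a)]
        field_simp
        norm_num
  · have hCeq' : C = d0 :: List.orderedInsert (· ≤ ·) a (d1 :: rest.erase (d o m)) := by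
      rw [hC, List.orderedInsert, if_neg (not_le.mpr h1)]
    rcases le_or_gt a d1 with h2 | h2
    · have hCeq : C = d0 :: a :: d1 :: rest.erase (d o m) := by
        rw [hCeq', List.orderedInsert, if_pos h2]
      have hms' : msil d (insert j (M.erase m)) o = 1 - d0 / a := by
        rw [msil, if_neg, hnd 0, hnd 1, hCeq] <;>
          simp [hnd, hCeq, hpos.ne']
      rw [hms', hmsM, if_neg (not_lt.mpr h1.le)]
      rcases lt_or_eq_of_le h2 with h2' | h2'
      · rw [if_pos h2']; ring
      · subst h2'
        rw [if_neg (lt_irrefl a)]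
        ring
    · have hCeq : C = d0 :: d1 :: List.orderedInsert (· ≤ ·) a (rest.erase (d o m)) := by
        rw [hCeq', List.orderedInsert, if_neg (not_le.mpr h2)]
      have hms' : msil d (insert j (M.erase m)) o = 1 - d0 / d1 := by
        rw [msil, if_neg, hnd 0, hnd 1, hCeq] <;>
          simp [hnd, hCeq, hpos.ne']
      rw [hms', hmsM, if_neg (not_lt.mpr h1.le), if_neg (not_lt.mpr h2.le)]
      ring
end
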